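/- arXiv:2605.19195 — 3 statements merged into one kernel-verified Lean document; each statement's English description precedes it below -/
import Mathlib

section
/- For n ≥ 1 and σ_x, σ_ξ > 0, the integral ∫_{-∞}^{∞} (σ_x² σ_ξ² / (σ_x² z² + σ_ξ²))^{(n+1)/2} · ln(z² + σ_ξ²/σ_x²) dz equals (σ_x^n σ_ξ √π Γ(n/2) / Γ((n+1)/2)) · [ψ((n+1)/2) - ψ(n/2) + ln(σ_ξ²/σ_x²)]. -/
open MeasureTheory Real

open Set

/-- The digamma function `ψ = Γ'/Γ`. -/
noncomputable def digamma (x : ℝ) : ℝ := deriv Real.Gamma x / Real.Gamma x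

lemma aux_prod_integrable {s : ℝ} (hs : 1/2 < s) :
    Integrable (fun p : ℝ × ℝ ↦ p.1 ^ (s - 1) * Real.exp (-p.1) * Real.exp (-p.1 * p.2 ^ 2))
      ((volume.restrict (Ioi 0)).prod volume) := by
  have hs0 : (0:ℝ) < s := by linarith
  have hmeas : AEStronglyMeasurable
      (fun p : ℝ × ℝ ↦ p.1 ^ (s - 1) * Real.exp (-p.1) * Real.exp (-p.1 * p.2 ^ 2))
      ((volume.restrict (Ioi 0)).prod volume) := by
    apply Measurable.aestronglyMeasurable; fun_prop
  rw [MeasureTheory.integrable_prod_iff hmeas]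
  have hcong : ∀ t ∈ Ioi (0:ℝ),
      (∫ u : ℝ, ‖t ^ (s - 1) * Real.exp (-t) * Real.exp (-t * u ^ 2)‖)
        = Real.sqrt π * (Real.exp (-t) * t ^ (s - 1/2 - 1)) := by
    intro t ht
    have ht' : (0:ℝ) < t := ht
    have h1 : ∀ u : ℝ, ‖t ^ (s - 1) * Real.exp (-t) * Real.exp (-t * u ^ 2)‖
        = t ^ (s - 1) * Real.exp (-t) * Real.exp (-t * u ^ 2) := by
      intro u
      rw [Real.norm_eq_abs, abs_of_nonneg]; positivity
    simp_rw [h1]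
    rw [MeasureTheory.integral_const_mul, integral_gaussian]
    have h2 : Real.sqrt (π / t) = Real.sqrt π * t ^ (-(1/2) : ℝ) := by
      rw [show π / t = π * t⁻¹ by ring, Real.sqrt_mul pi_pos.le, Real.sqrt_inv,
        Real.sqrt_eq_rpow t, ← Real.rpow_neg ht'.le]
    rw [h2]
    have h3 : t ^ (s - 1) * t ^ (-(1/2) : ℝ) = t ^ (s - 1/2 - 1) := by
      rw [← Real.rpow_add ht']; norm_num; ring_nf
    calc t ^ (s - 1) * Real.exp (-t) * (Real.sqrt π * t ^ (-(1/2):ℝ))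
        = Real.sqrt π * (Real.exp (-t) * (t ^ (s - 1) * t ^ (-(1/2):ℝ))) := by ring
      _ = Real.sqrt π * (Real.exp (-t) * t ^ (s - 1/2 - 1)) := by rw [h3]
  constructor
  · filter_upwards [self_mem_ae_restrict (measurableSet_Ioi : MeasurableSet (Ioi (0:ℝ)))]
      with t ht
    exact ((integrable_exp_neg_mul_sq ht).const_mul _)
  · have base : IntegrableOn (fun t : ℝ ↦ Real.sqrt π * (Real.exp (-t) * t ^ (s - 1/2 - 1)))
        (Ioi 0) := (Real.GammaIntegral_convergent (by linarith : (0:ℝ) < s - 1/2)).const_mul _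
    refine base.congr ?_
    filter_upwards [self_mem_ae_restrict (measurableSet_Ioi : MeasurableSet (Ioi (0:ℝ)))]
      with t ht
    exact (hcong t ht).symm

lemma aux_G {s : ℝ} (hs : 1/2 < s) :
    Integrable (fun u : ℝ ↦ (1 + u ^ 2) ^ (-s)) ∧
    ∫ u : ℝ, (1 + u ^ 2) ^ (-s) = Real.sqrt π * Real.Gamma (s - 1/2) / Real.Gamma s := by
  have hs0 : (0:ℝ) < s := by linarith
  have hΓ : (0:ℝ) < Real.Gamma s := Real.Gamma_pos_of_pos hs0
  have hprod := aux_prod_integrable hs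
  -- inner integral over t, for each u
  have hinner : ∀ u : ℝ,
      (∫ t in Ioi (0:ℝ), t ^ (s - 1) * Real.exp (-t) * Real.exp (-t * u ^ 2))
        = Real.Gamma s * (1 + u ^ 2) ^ (-s) := by
    intro u
    have hr : (0:ℝ) < 1 + u ^ 2 := by positivity
    have heq : ∀ t : ℝ, t ^ (s - 1) * Real.exp (-t) * Real.exp (-t * u ^ 2)
        = t ^ (s - 1) * Real.exp (-((1 + u ^ 2) * t)) := by
      intro t
      rw [mul_assoc, ← Real.exp_add]
      ring_nf
    simp_rw [heq]
    rw [Real.integral_rpow_mul_exp_neg_mul_Ioi hs0 hr]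
    rw [one_div, ← Real.rpow_neg_one, ← Real.rpow_mul hr.le, neg_one_mul, mul_comm]
  -- inner integral over u, for each t > 0
  have hinner2 : ∀ t ∈ Ioi (0:ℝ),
      (∫ u : ℝ, t ^ (s - 1) * Real.exp (-t) * Real.exp (-t * u ^ 2))
        = Real.sqrt π * (Real.exp (-t) * t ^ (s - 1/2 - 1)) := by
    intro t ht
    have ht' : (0:ℝ) < t := ht
    rw [MeasureTheory.integral_const_mul, integral_gaussian]
    have h2 : Real.sqrt (π / t) = Real.sqrt π * t ^ (-(1/2) : ℝ) := by
      rw [show π / t = π * t⁻¹ by ring, Real.sqrt_mul pi_pos.le, Real.sqrt_inv,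
        Real.sqrt_eq_rpow t, ← Real.rpow_neg ht'.le]
    rw [h2]
    have h3 : t ^ (s - 1) * t ^ (-(1/2) : ℝ) = t ^ (s - 1/2 - 1) := by
      rw [← Real.rpow_add ht']; norm_num; ring_nf
    calc t ^ (s - 1) * Real.exp (-t) * (Real.sqrt π * t ^ (-(1/2):ℝ))
        = Real.sqrt π * (Real.exp (-t) * (t ^ (s - 1) * t ^ (-(1/2):ℝ))) := by ring
      _ = Real.sqrt π * (Real.exp (-t) * t ^ (s - 1/2 - 1)) := by rw [h3]
  have hswap := MeasureTheory.integral_integral_swap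
    (f := fun t u : ℝ ↦ t ^ (s - 1) * Real.exp (-t) * Real.exp (-t * u ^ 2))
    (μ := volume.restrict (Ioi 0)) (ν := volume) hprod
  -- LHS of swap
  have hL : (∫ t in Ioi (0:ℝ), ∫ u : ℝ, t ^ (s - 1) * Real.exp (-t) * Real.exp (-t * u ^ 2))
      = Real.sqrt π * Real.Gamma (s - 1/2) := by
    rw [setIntegral_congr_fun (measurableSet_Ioi) hinner2, MeasureTheory.integral_const_mul,
      ← Real.Gamma_eq_integral (by linarith : (0:ℝ) < s - 1/2)]
  have hR : (∫ u : ℝ, ∫ t in Ioi (0:ℝ), t ^ (s - 1) * Real.exp (-t) * Real.exp (-t * u ^ 2))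
      = Real.Gamma s * ∫ u : ℝ, (1 + u ^ 2) ^ (-s) := by
    simp_rw [hinner]
    rw [MeasureTheory.integral_const_mul]
  have hint : Integrable (fun u : ℝ ↦ (1 + u ^ 2) ^ (-s)) := by
    have h := hprod.integral_prod_right
    simp only at h
    have h2 : Integrable (fun u : ℝ ↦ Real.Gamma s * (1 + u ^ 2) ^ (-s)) := by
      refine h.congr ?_
      filter_upwards with u using hinner u
    have := h2.const_mul (Real.Gamma s)⁻¹
    refine this.congr ?_
    filter_upwards with u
    field_simp
  refine ⟨hint, ?_⟩
  have := hswap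
  rw [hL, hR] at this
  rw [eq_div_iff (ne_of_gt hΓ)]
  linarith [this]

lemma aux_log_le {x δ : ℝ} (hx : 1 ≤ x) (hδ : 0 < δ) : Real.log x ≤ x ^ δ / δ := by
  have hx0 : (0:ℝ) < x := by linarith
  have h1 : Real.log (x ^ δ) = δ * Real.log x := Real.log_rpow hx0 δ
  have h2 : Real.log (x ^ δ) ≤ x ^ δ - 1 := Real.log_le_sub_one_of_pos (by positivity)
  rw [div_eq_inv_mul]
  calc Real.log x = δ⁻¹ * (δ * Real.log x) := by field_simp
    _ = δ⁻¹ * Real.log (x ^ δ) := by rw [h1]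
    _ ≤ δ⁻¹ * (x ^ δ) := by
        apply mul_le_mul_of_nonneg_left _ (by positivity)
        linarith

lemma aux_cont (s : ℝ) : Continuous fun u : ℝ ↦ (1 + u ^ 2) ^ (-s) := by
  have hc : Continuous fun u : ℝ ↦ (1 + u ^ 2 : ℝ) := by continuity
  exact hc.rpow_const fun u ↦ Or.inl (by positivity)

lemma aux_cont_log (s : ℝ) :
    Continuous fun u : ℝ ↦ (1 + u ^ 2) ^ (-s) * Real.log (1 + u ^ 2) := by
  have hc : Continuous fun u : ℝ ↦ (1 + u ^ 2 : ℝ) := by continuity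
  exact (aux_cont s).mul (hc.log fun u ↦ by positivity)

lemma aux_logint {s : ℝ} (hs : 1/2 < s) :
    Integrable (fun u : ℝ ↦ (1 + u ^ 2) ^ (-s) * Real.log (1 + u ^ 2)) := by
  set δ : ℝ := (s - 1/2)/2 with hδdef
  have hδ : (0:ℝ) < δ := by rw [hδdef]; linarith
  have hs' : 1/2 < s - δ := by rw [hδdef]; linarith
  have h := ((aux_G hs').1.const_mul (1/δ))
  refine h.mono (aux_cont_log s).aestronglyMeasurable ?_
  filter_upwards with u
  have ha : (1:ℝ) ≤ 1 + u ^ 2 := by nlinarith [sq_nonneg u]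
  have ha0 : (0:ℝ) < 1 + u ^ 2 := by positivity
  have hlog : (0:ℝ) ≤ Real.log (1 + u ^ 2) := Real.log_nonneg ha
  rw [Real.norm_eq_abs, Real.norm_eq_abs, abs_of_nonneg (by positivity),
    abs_of_nonneg (by positivity)]
  calc (1 + u ^ 2) ^ (-s) * Real.log (1 + u ^ 2)
      ≤ (1 + u ^ 2) ^ (-s) * ((1 + u ^ 2) ^ δ / δ) := by
        exact mul_le_mul_of_nonneg_left (aux_log_le ha hδ) (by positivity)
    _ = 1/δ * (1 + u ^ 2) ^ (-(s - δ)) := by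
        rw [show -(s - δ) = -s + δ by ring, Real.rpow_add ha0]
        ring

lemma aux_hasDerivAt {s₀ : ℝ} (hs₀ : 1 ≤ s₀) :
    HasDerivAt (fun s : ℝ ↦ ∫ u : ℝ, (1 + u ^ 2) ^ (-s))
      (-∫ u : ℝ, (1 + u ^ 2) ^ (-s₀) * Real.log (1 + u ^ 2)) s₀ := by
  have key := hasDerivAt_integral_of_dominated_loc_of_deriv_le
    (F := fun (s : ℝ) (u : ℝ) ↦ (1 + u ^ 2) ^ (-s))
    (F' := fun (s : ℝ) (u : ℝ) ↦ -((1 + u ^ 2) ^ (-s) * Real.log (1 + u ^ 2)))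
    (x₀ := s₀) (s := Metric.ball s₀ (1/4))
    (bound := fun u : ℝ ↦ (1 + u ^ 2) ^ (-(s₀ - 1/4)) * Real.log (1 + u ^ 2))
    (μ := volume) (Metric.ball_mem_nhds _ (by norm_num))
    (Filter.Eventually.of_forall fun s ↦ (aux_cont s).aestronglyMeasurable)
    (aux_G (by linarith : (1:ℝ)/2 < s₀)).1
    ((aux_cont_log s₀).neg.aestronglyMeasurable)
    ?_ (aux_logint (by linarith : (1:ℝ)/2 < s₀ - 1/4)) ?_
  · have := key.2
    rwa [MeasureTheory.integral_neg] at this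
  · -- bound
    filter_upwards with u
    intro s hsball
    have hds : s₀ - s < 1/4 := by
      rw [Metric.mem_ball, Real.dist_eq, abs_lt] at hsball
      linarith [hsball.1]
    have ha : (1:ℝ) ≤ 1 + u ^ 2 := by nlinarith [sq_nonneg u]
    have hlog : (0:ℝ) ≤ Real.log (1 + u ^ 2) := Real.log_nonneg ha
    rw [norm_neg, Real.norm_eq_abs, abs_of_nonneg (by positivity)]
    exact mul_le_mul_of_nonneg_right
      (Real.rpow_le_rpow_of_exponent_le ha (by linarith)) hlog
  · -- differentiability
    filter_upwards with u
    intro s _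
    have ha0 : (0:ℝ) < 1 + u ^ 2 := by positivity
    have h := (Real.hasStrictDerivAt_const_rpow ha0 (-s)).hasDerivAt
    have hneg : HasDerivAt (fun s : ℝ ↦ -s) (-1) s := (hasDerivAt_id s).neg
    have : HasDerivAt (fun x : ℝ ↦ (1 + u ^ 2) ^ (-x))
        ((1 + u ^ 2) ^ (-s) * Real.log (1 + u ^ 2) * -1) s := h.comp s hneg
    exact this.congr_deriv (by ring)

lemma aux_value {s₀ : ℝ} (hs₀ : 1 ≤ s₀) :
    ∫ u : ℝ, (1 + u ^ 2) ^ (-s₀) * Real.log (1 + u ^ 2)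
      = Real.sqrt π * Real.Gamma (s₀ - 1/2) / Real.Gamma s₀
          * (digamma s₀ - digamma (s₀ - 1/2)) := by
  have hΓb : Real.Gamma s₀ ≠ 0 := (Real.Gamma_pos_of_pos (by linarith)).ne'
  have hΓa : Real.Gamma (s₀ - 1/2) ≠ 0 := (Real.Gamma_pos_of_pos (by linarith)).ne'
  have hda : DifferentiableAt ℝ Real.Gamma (s₀ - 1/2) :=
    Real.differentiableAt_Gamma fun m ↦ by
      have hm : (0:ℝ) ≤ m := Nat.cast_nonneg m
      intro hEq; linarith
  have hdb : DifferentiableAt ℝ Real.Gamma s₀ :=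
    Real.differentiableAt_Gamma fun m ↦ by
      have hm : (0:ℝ) ≤ m := Nat.cast_nonneg m
      intro hEq; linarith
  have hsub : HasDerivAt (fun s : ℝ ↦ s - 1/2) 1 s₀ := (hasDerivAt_id s₀).sub_const _
  have hA : HasDerivAt (fun s : ℝ ↦ Real.Gamma (s - 1/2))
      (deriv Real.Gamma (s₀ - 1/2)) s₀ := by
    have := (hda.hasDerivAt).comp s₀ hsub
    exact (hda.hasDerivAt).comp_sub_const s₀ (1/2)
  have hB : HasDerivAt Real.Gamma (deriv Real.Gamma s₀) s₀ := hdb.hasDerivAt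
  have hH : HasDerivAt (fun s : ℝ ↦ Real.sqrt π * (Real.Gamma (s - 1/2) / Real.Gamma s))
      (Real.sqrt π * ((deriv Real.Gamma (s₀ - 1/2) * Real.Gamma s₀
        - Real.Gamma (s₀ - 1/2) * deriv Real.Gamma s₀) / (Real.Gamma s₀) ^ 2)) s₀ :=
    (hA.div hB hΓb).const_mul _
  have hmem : Ioi (1/2 : ℝ) ∈ nhds s₀ := isOpen_Ioi.mem_nhds (by simp; linarith)
  have heq : (fun s : ℝ ↦ ∫ u : ℝ, (1 + u ^ 2) ^ (-s))
      =ᶠ[nhds s₀] (fun s : ℝ ↦ Real.sqrt π * (Real.Gamma (s - 1/2) / Real.Gamma s)) := by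
    filter_upwards [hmem] with s hs
    rw [(aux_G hs).2, mul_div_assoc]
  have hG' := hH.congr_of_eventuallyEq heq
  have huniq := (aux_hasDerivAt hs₀).unique hG'
  rw [digamma, digamma]
  have : ∫ u : ℝ, (1 + u ^ 2) ^ (-s₀) * Real.log (1 + u ^ 2)
      = -(Real.sqrt π * ((deriv Real.Gamma (s₀ - 1/2) * Real.Gamma s₀
        - Real.Gamma (s₀ - 1/2) * deriv Real.Gamma s₀) / (Real.Gamma s₀) ^ 2)) := by
    linarith
  rw [this]
  set A := deriv Real.Gamma (s₀ - 1/2) with hA'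
  set C := Real.Gamma (s₀ - 1/2) with hC'
  set D := deriv Real.Gamma s₀ with hD'
  set B := Real.Gamma s₀ with hB'
  field_simp
  ring

/-- The logarithmic moment integral of the scaled Student's t kernel. -/
theorem student_kernel_log_integral
    (n : ℕ) (hn : 1 ≤ n) (σx σξ : ℝ) (hσx : 0 < σx) (hσξ : 0 < σξ) :
    (∫ z : ℝ, (σx ^ 2 * σξ ^ 2 / (σx ^ 2 * z ^ 2 + σξ ^ 2)) ^ (((n : ℝ) + 1) / 2)
        * Real.log (z ^ 2 + σξ ^ 2 / σx ^ 2))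
      = (σx ^ n * σξ * Real.sqrt Real.pi * Real.Gamma ((n : ℝ) / 2)
            / Real.Gamma (((n : ℝ) + 1) / 2))
        * (digamma (((n : ℝ) + 1) / 2) - digamma ((n : ℝ) / 2)
            + Real.log (σξ ^ 2 / σx ^ 2)) := by
  have hn' : (1:ℝ) ≤ (n:ℝ) := by exact_mod_cast hn
  set s₀ : ℝ := ((n : ℝ) + 1) / 2 with hs₀def
  have hs₀1 : 1 ≤ s₀ := by rw [hs₀def]; linarith
  have hs₀half : 1/2 < s₀ := by linarith
  set c : ℝ := σξ / σx with hcdef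
  have hc : 0 < c := div_pos hσξ hσx
  have hc2 : c ^ 2 = σξ ^ 2 / σx ^ 2 := by rw [hcdef, div_pow]
  set g : ℝ → ℝ := fun u ↦ (σx ^ 2 : ℝ) ^ s₀
      * ((1 + u ^ 2) ^ (-s₀) * (Real.log (1 + u ^ 2) + Real.log (c ^ 2))) with hgdef
  -- pointwise identity
  have hpt : ∀ z : ℝ, (σx ^ 2 * σξ ^ 2 / (σx ^ 2 * z ^ 2 + σξ ^ 2)) ^ s₀
      * Real.log (z ^ 2 + σξ ^ 2 / σx ^ 2) = g (c⁻¹ * z) := by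
    intro z
    set u : ℝ := c⁻¹ * z with hudef
    have hu2 : (0:ℝ) < 1 + u ^ 2 := by positivity
    have hi : σx ^ 2 * σξ ^ 2 / (σx ^ 2 * z ^ 2 + σξ ^ 2) = σx ^ 2 / (1 + u ^ 2) := by
      rw [hudef, hcdef]
      rw [div_eq_div_iff (by positivity) (by positivity)]
      field_simp
      ring
    have hii : z ^ 2 + σξ ^ 2 / σx ^ 2 = c ^ 2 * (1 + u ^ 2) := by
      rw [hudef, hcdef]
      field_simp
      ring
    rw [hi, hii]
    rw [div_eq_mul_inv, Real.mul_rpow (by positivity) (by positivity),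
      Real.inv_rpow hu2.le, ← Real.rpow_neg hu2.le,
      Real.log_mul (by positivity) (by positivity)]
    rw [hgdef]
    ring
  simp_rw [hpt]
  rw [Measure.integral_comp_mul_left g c⁻¹, inv_inv, abs_of_pos hc, smul_eq_mul]
  -- compute ∫ g
  have hIg : ∫ u : ℝ, g u = (σx ^ 2 : ℝ) ^ s₀
      * ((∫ u : ℝ, (1 + u ^ 2) ^ (-s₀) * Real.log (1 + u ^ 2))
        + Real.log (c ^ 2) * ∫ u : ℝ, (1 + u ^ 2) ^ (-s₀)) := by
    rw [hgdef]
    rw [MeasureTheory.integral_const_mul]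
    congr 1
    have h1 := aux_logint hs₀half
    have h2 := (aux_G hs₀half).1.const_mul (Real.log (c ^ 2))
    have heq : ∀ u : ℝ, (1 + u ^ 2) ^ (-s₀) * (Real.log (1 + u ^ 2) + Real.log (c ^ 2))
        = (1 + u ^ 2) ^ (-s₀) * Real.log (1 + u ^ 2)
          + Real.log (c ^ 2) * (1 + u ^ 2) ^ (-s₀) := fun u ↦ by ring
    simp_rw [heq]
    rw [MeasureTheory.integral_add h1 h2, MeasureTheory.integral_const_mul]
  rw [hIg, aux_value hs₀1, (aux_G hs₀half).2]
  have hhalf : s₀ - 1/2 = (n : ℝ) / 2 := by rw [hs₀def]; ring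
  rw [hhalf]
  -- power bookkeeping
  have hpow : (σx ^ 2 : ℝ) ^ s₀ = σx ^ (n + 1) := by
    rw [← Real.rpow_natCast σx 2, ← Real.rpow_mul hσx.le]
    rw [show ((2:ℕ) : ℝ) * s₀ = ((n + 1 : ℕ) : ℝ) by rw [hs₀def]; push_cast; ring]
    exact Real.rpow_natCast σx (n + 1)
  rw [hpow, ← hc2]
  have hcx : c * σx ^ (n + 1) = σx ^ n * σξ := by
    rw [hcdef, pow_succ]
    field_simp
  have hΓ : Real.Gamma s₀ ≠ 0 := (Real.Gamma_pos_of_pos (by linarith)).ne'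
  linear_combination (Real.sqrt π * Real.Gamma ((n:ℝ)/2) / Real.Gamma s₀ * (digamma s₀ - digamma ((n:ℝ)/2)
    + Real.log (c ^ 2))) * hcx
end

section
/- Let X ~ N(0, σ²) with σ > 0 and p ∈ ℕ with p ≥ 1. Then -∫_{-∞}^{∞} f_X(x) log₂(|x| · 2^{1-p} / √2) dx + h(X) = p + (1/2)log₂(2πe) + γ/(2 ln 2), where γ is the Euler–Mascheroni constant and h(X) = (1/2)log₂(2πe σ²). In particular, this quantity is independent of σ. -/
open MeasureTheory Real

open Set

local notation "γ" => Real.eulerMascheroniConstant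

lemma gammaHalfDerivIntegral :
    ∫ t in Ioi (0:ℝ), t ^ (-(1/2) : ℝ) * (Real.log t * Real.exp (-t))
      = -Real.sqrt π * (γ + 2 * Real.log 2) := by
  have h1 := Complex.hasDerivAt_GammaIntegral (s := (1/2 : ℂ)) (by norm_num)
  have hev : Complex.GammaIntegral =ᶠ[nhds (1/2 : ℂ)] Complex.Gamma := by
    filter_upwards [(isOpen_lt continuous_const Complex.continuous_re).mem_nhds
      (by norm_num : ((0:ℝ) < (1/2 : ℂ).re))] with s hs
    exact (Complex.Gamma_eq_integral hs).symm
  have h2 : HasDerivAt Complex.GammaIntegral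
      (((-Real.sqrt π * (γ + 2 * Real.log 2) : ℝ) : ℂ)) (1/2 : ℂ) := by
    refine (Complex.hasDerivAt_Gamma_one_half.congr_of_eventuallyEq hev).congr_deriv ?_
    rw [show ((2:ℂ)) = ((2:ℝ):ℂ) by norm_num, ← Complex.ofReal_log (by norm_num : (0:ℝ) ≤ 2)]
    push_cast
    ring
  have h3 := h1.unique h2
  rw [← RCLike.ofReal_inj (K := ℂ), ← integral_ofReal,
    show ((RCLike.ofReal : ℝ → ℂ) = Complex.ofReal) from rfl, ← h3]
  refine setIntegral_congr_fun measurableSet_Ioi (fun t ht => ?_)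
  rw [show (1/2 : ℂ) - 1 = ((-(1/2) : ℝ) : ℂ) by norm_num,
    ← Complex.ofReal_cpow (le_of_lt ht)]
  norm_cast

lemma logMulExpIntegrable {b : ℝ} (hb : 0 < b) :
    IntegrableOn (fun x => Real.log x * Real.exp (-b * x ^ 2)) (Ioi 0) := by
  have h1 := (integrableOn_rpow_mul_exp_neg_mul_sq hb (s := -(1/2)) (by norm_num)).const_mul 2
  have h2 := integrableOn_rpow_mul_exp_neg_mul_sq hb (s := 1) (by norm_num)
  refine (h1.add h2).mono' ?_ ?_
  · exact (Real.measurable_log.mul (by measurability)).aestronglyMeasurable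
  · filter_upwards [ae_restrict_mem measurableSet_Ioi] with x hx
    have hx : (0:ℝ) < x := hx
    rw [Real.norm_eq_abs, abs_mul, abs_of_nonneg (exp_pos _).le]
    have key : |Real.log x| ≤ 2 * x ^ (-(1/2) : ℝ) + x ^ (1:ℝ) := by
      rcases le_or_gt 1 x with h | h
      · rw [abs_of_nonneg (Real.log_nonneg h), rpow_one]
        have := Real.log_le_sub_one_of_pos hx
        have : (0:ℝ) ≤ 2 * x ^ (-(1/2) : ℝ) := by positivity
        linarith [Real.log_le_sub_one_of_pos hx]
      · have hneg : Real.log x ≤ 0 := Real.log_nonpos hx.le h.le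
        rw [abs_of_nonpos hneg]
        have h1 : Real.log (x ^ (-(1/2) : ℝ)) ≤ x ^ (-(1/2) : ℝ) - 1 :=
          Real.log_le_sub_one_of_pos (rpow_pos_of_pos hx _)
        rw [Real.log_rpow hx] at h1
        have h2 : (0:ℝ) ≤ x ^ (1:ℝ) := by positivity
        linarith only [h1, h2]
    calc |Real.log x| * Real.exp (-b * x ^ 2)
        ≤ (2 * x ^ (-(1/2) : ℝ) + x ^ (1:ℝ)) * Real.exp (-b * x ^ 2) :=
          mul_le_mul_of_nonneg_right key (exp_pos _).le
      _ = 2 * (x ^ (-(1/2) : ℝ) * Real.exp (-b * x ^ 2))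
            + x ^ (1:ℝ) * Real.exp (-b * x ^ 2) := by ring

lemma logGaussIntegral (σ : ℝ) (hσ : 0 < σ) :
    ∫ x in Ioi (0:ℝ), Real.log x * Real.exp (-(2*σ^2)⁻¹ * x ^ 2)
      = σ * (Real.sqrt 2 * Real.sqrt π)
          * (2 * Real.log σ - γ - Real.log 2) / 4 := by
  set b : ℝ := (2*σ^2)⁻¹ with hbdef
  have hb : 0 < b := by positivity
  set g : ℝ → ℝ := fun u => u ^ (-(1/2) : ℝ) * (Real.log u * Real.exp (-u)) with hg
  -- substitution chain
  have A1 : ∫ x in Ioi (0:ℝ), g (b * x) = b⁻¹ • ∫ x in Ioi (b * 0), g x :=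
    integral_comp_mul_left_Ioi g 0 hb
  rw [mul_zero, smul_eq_mul, gammaHalfDerivIntegral] at A1
  have A2 : (∫ x in Ioi (0:ℝ), (|(2:ℝ)| * x ^ ((2:ℝ) - 1)) • g (b * x ^ (2:ℝ)))
      = ∫ y in Ioi (0:ℝ), g (b * y) :=
    integral_comp_rpow_Ioi (fun y => g (b * y)) two_ne_zero
  rw [A1] at A2
  -- pointwise rewriting of the substituted integrand
  have A3 : ∫ x in Ioi (0:ℝ), (|(2:ℝ)| * x ^ ((2:ℝ) - 1)) • g (b * x ^ (2:ℝ))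
      = ∫ x in Ioi (0:ℝ), (2 * b ^ (-(1/2) : ℝ))
          * ((Real.log b + 2 * Real.log x) * Real.exp (-b * x ^ 2)) := by
    refine setIntegral_congr_fun measurableSet_Ioi (fun x hx => ?_)
    have hx : (0:ℝ) < x := hx
    have hx2 : x ^ ((2:ℝ)) = x ^ 2 := Real.rpow_two x
    simp only [hg, smul_eq_mul, hx2]
    rw [show |(2:ℝ)| = 2 by norm_num, show ((2:ℝ) - 1) = 1 by norm_num, rpow_one,
      Real.mul_rpow hb.le (sq_nonneg x),
      show (x ^ 2 : ℝ) ^ (-(1/2) : ℝ) = x⁻¹ by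
        rw [← Real.rpow_natCast x 2, ← Real.rpow_mul hx.le,
          show ((2:ℕ):ℝ) * (-(1/2)) = -1 by norm_num, Real.rpow_neg_one],
      Real.log_mul hb.ne' (by positivity), Real.log_pow]
    have : Real.exp (-(b * x ^ 2)) = Real.exp (-b * x ^ 2) := by ring_nf
    rw [this]
    field_simp
    ring
  rw [A3] at A2
  rw [integral_const_mul] at A2
  -- split the integral
  have hsplit : ∫ x in Ioi (0:ℝ),
        (Real.log b + 2 * Real.log x) * Real.exp (-b * x ^ 2)
      = Real.log b * (Real.sqrt (π / b) / 2)
        + 2 * ∫ x in Ioi (0:ℝ), Real.log x * Real.exp (-b * x ^ 2) := by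
    have h1 : IntegrableOn (fun x => Real.log b * Real.exp (-b * x ^ 2)) (Ioi 0) :=
      ((integrable_exp_neg_mul_sq hb).integrableOn).const_mul _
    have h2 : IntegrableOn (fun x => 2 * (Real.log x * Real.exp (-b * x ^ 2))) (Ioi 0) :=
      (logMulExpIntegrable hb).const_mul 2
    rw [show (fun x => (Real.log b + 2 * Real.log x) * Real.exp (-b * x ^ 2))
        = fun x => Real.log b * Real.exp (-b * x ^ 2)
            + 2 * (Real.log x * Real.exp (-b * x ^ 2)) by funext x; ring,
      integral_add h1 h2, integral_const_mul, integral_const_mul, integral_gaussian_Ioi]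
  rw [hsplit] at A2
  -- explicit values
  have hs2 : Real.sqrt 2 * Real.sqrt 2 = 2 := Real.mul_self_sqrt (by norm_num)
  have hbinv : b⁻¹ = 2 * σ ^ 2 := by rw [hbdef, inv_inv]
  have hbhalf : b ^ (-(1/2) : ℝ) = Real.sqrt 2 * σ := by
    rw [hbdef, Real.inv_rpow (by positivity), Real.rpow_neg (by positivity), inv_inv,
      ← Real.sqrt_eq_rpow, Real.sqrt_mul (by norm_num : (0:ℝ) ≤ 2), Real.sqrt_sq hσ.le]
  have hsqpib : Real.sqrt (π / b) = Real.sqrt 2 * σ * Real.sqrt π := by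
    rw [div_eq_mul_inv, hbinv, Real.sqrt_mul pi_pos.le, Real.sqrt_mul (by norm_num : (0:ℝ) ≤ 2),
      Real.sqrt_sq hσ.le]
    ring
  have hlogb : Real.log b = -(Real.log 2 + 2 * Real.log σ) := by
    rw [hbdef, Real.log_inv, Real.log_mul (by norm_num) (by positivity), Real.log_pow]
    push_cast; ring
  rw [hbinv, hbhalf, hsqpib, hlogb] at A2
  refine mul_left_cancel₀ (a := 4 * (Real.sqrt 2 * σ)) (by positivity) ?_
  linear_combination A2 + (σ^2 * Real.sqrt π * (γ + 2 * Real.log 2)) * hs2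

/-- The smooth floating-point entropy approximation of a centered Gaussian:
`H̃⁰_s(p) = h(X) - E[log₂ Δ_s(X)] = p + ½log₂(2πe) + γ/(2 ln 2)`, independent of `σ`. -/
theorem smooth_fp_entropy_gaussian (σ : ℝ) (hσ : 0 < σ) (p : ℕ) (hp : 1 ≤ p) :
    -(∫ x : ℝ, (Real.exp (-(x ^ 2) / (2 * σ ^ 2)) / (σ * Real.sqrt (2 * Real.pi)))
          * Real.logb 2 (|x| * (2 : ℝ) ^ (1 - (p : ℝ)) / Real.sqrt 2))
      + (1 / 2) * Real.logb 2 (2 * Real.pi * Real.exp 1 * σ ^ 2)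
      = (p : ℝ) + (1 / 2) * Real.logb 2 (2 * Real.pi * Real.exp 1)
          + Real.eulerMascheroniConstant / (2 * Real.log 2) := by
  have hb : (0:ℝ) < (2*σ^2)⁻¹ := by positivity
  have hL : (0:ℝ) < Real.log 2 := Real.log_pos (by norm_num)
  have hq : (0:ℝ) < Real.sqrt π := Real.sqrt_pos.mpr pi_pos
  have hs : (0:ℝ) < Real.sqrt 2 := Real.sqrt_pos.mpr (by norm_num)
  have hs2π : Real.sqrt (2*π) = Real.sqrt 2 * Real.sqrt π := Real.sqrt_mul (by norm_num) π
  set c1 : ℝ := (σ * (Real.sqrt 2 * Real.sqrt π) * Real.log 2)⁻¹ with hc1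
  set c2 : ℝ := ((1 - (p:ℝ)) - 1/2) / (σ * (Real.sqrt 2 * Real.sqrt π)) with hc2
  set f0 : ℝ → ℝ := fun y => Real.exp (-(2*σ^2)⁻¹ * y ^ 2) / (σ * Real.sqrt (2 * π))
      * Real.logb 2 (y * (2 : ℝ) ^ (1 - (p : ℝ)) / Real.sqrt 2) with hf0
  have step1 : (∫ x : ℝ, (Real.exp (-(x ^ 2) / (2 * σ ^ 2)) / (σ * Real.sqrt (2 * π)))
          * Real.logb 2 (|x| * (2 : ℝ) ^ (1 - (p : ℝ)) / Real.sqrt 2))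
      = 2 * ∫ x in Ioi (0:ℝ), f0 x := by
    rw [show (fun x : ℝ => (Real.exp (-(x ^ 2) / (2 * σ ^ 2)) / (σ * Real.sqrt (2 * π)))
          * Real.logb 2 (|x| * (2 : ℝ) ^ (1 - (p : ℝ)) / Real.sqrt 2))
        = fun x : ℝ => f0 |x| by
      funext x
      rw [hf0]
      simp only [sq_abs]
      congr 2
      ring]
    exact integral_comp_abs
  have step2 : ∫ x in Ioi (0:ℝ), f0 x
      = ∫ x in Ioi (0:ℝ), (c1 * (Real.log x * Real.exp (-(2*σ^2)⁻¹ * x ^ 2))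
          + c2 * Real.exp (-(2*σ^2)⁻¹ * x ^ 2)) := by
    refine setIntegral_congr_fun measurableSet_Ioi (fun x hx => ?_)
    have hx : (0:ℝ) < x := hx
    rw [hf0]
    simp only
    rw [Real.logb, Real.log_div (by positivity) (by positivity),
      Real.log_mul hx.ne' (by positivity), Real.log_rpow (by norm_num),
      Real.log_sqrt (by norm_num), hs2π, hc1, hc2]
    field_simp
    ring
  have step3 : ∫ x in Ioi (0:ℝ), (c1 * (Real.log x * Real.exp (-(2*σ^2)⁻¹ * x ^ 2))
          + c2 * Real.exp (-(2*σ^2)⁻¹ * x ^ 2))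
      = c1 * (σ * (Real.sqrt 2 * Real.sqrt π) * (2 * Real.log σ - γ - Real.log 2) / 4)
        + c2 * (Real.sqrt 2 * σ * Real.sqrt π / 2) := by
    rw [integral_add ((logMulExpIntegrable hb).const_mul c1)
        (((integrable_exp_neg_mul_sq hb).integrableOn).const_mul c2),
      integral_const_mul, integral_const_mul, logGaussIntegral σ hσ, integral_gaussian_Ioi]
    congr 2
    rw [show π / (2*σ^2)⁻¹ = π * (2*σ^2) by field_simp, Real.sqrt_mul pi_pos.le, Real.sqrt_mul (by norm_num : (0:ℝ) ≤ 2),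
      Real.sqrt_sq hσ.le]
    ring
  rw [step1, step2, step3, hc1, hc2, Real.logb, Real.logb,
    Real.log_mul (by positivity) (by positivity), Real.log_pow]
  field_simp
  ring
end

section
/- For p ≥ 1 and e ∈ ℤ, the exponent-boundary ratio bounds hold: 2√2(1 - 2^{-p-1})/3 ≤ Δ_s(x)/Δ(x) ≤ 2√2(1 + 2^{-p})/3 for x in the boundary bin [2^{e+1}(1 - 2^{-p-1}), 2^{e+1}(1 + 2^{-p})), where Δ(x) = 3·2^{e-p} is the boundary bin width and Δ_s(x) = (|x|/√2)·2^{1-p}. Moreover both bounds lie in [1/√2, √2] for all p ≥ 1. -/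
open Real

/-- Bounds on the ratio of the smooth bin size to the true bin size on an
exponent-boundary bin, and the fact that both bounds lie in `[1/√2, √2]`. -/
theorem boundary_bin_ratio_bound (e : ℤ) (p : ℕ) (hp : 1 ≤ p) (x : ℝ)
    (hx₁ : (2 : ℝ) ^ (e + 1) * (1 - (2 : ℝ) ^ (-(p : ℤ) - 1)) ≤ x)
    (hx₂ : x < (2 : ℝ) ^ (e + 1) * (1 + (2 : ℝ) ^ (-(p : ℤ))))
    (Δ Δs : ℝ)
    (hΔ : Δ = 3 * (2 : ℝ) ^ (e - (p : ℤ)))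
    (hΔs : Δs = (|x| / Real.sqrt 2) * (2 : ℝ) ^ (1 - (p : ℤ))) :
    (2 * Real.sqrt 2 * (1 - (2 : ℝ) ^ (-(p : ℤ) - 1)) / 3 ≤ Δs / Δ
        ∧ Δs / Δ ≤ 2 * Real.sqrt 2 * (1 + (2 : ℝ) ^ (-(p : ℤ))) / 3)
      ∧ (1 / Real.sqrt 2 ≤ 2 * Real.sqrt 2 * (1 - (2 : ℝ) ^ (-(p : ℤ) - 1)) / 3
        ∧ 2 * Real.sqrt 2 * (1 + (2 : ℝ) ^ (-(p : ℤ))) / 3 ≤ Real.sqrt 2) := by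
  have hs : (0:ℝ) < Real.sqrt 2 := Real.sqrt_pos.mpr (by norm_num)
  have hs2 : Real.sqrt 2 * Real.sqrt 2 = 2 := Real.mul_self_sqrt (by norm_num)
  have hA : (2:ℝ) ^ (-(p:ℤ) - 1) ≤ 1/4 := by
    have h := zpow_le_zpow_right₀ (a := (2:ℝ)) one_le_two
      (show -(p:ℤ) - 1 ≤ -2 by omega)
    norm_num at h
    linarith
  have hA0 : (0:ℝ) < (2:ℝ) ^ (-(p:ℤ) - 1) := zpow_pos (by norm_num) _
  have hB : (2:ℝ) ^ (-(p:ℤ)) ≤ 1/2 := by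
    have h := zpow_le_zpow_right₀ (a := (2:ℝ)) one_le_two
      (show -(p:ℤ) ≤ -1 by omega)
    rw [zpow_neg, zpow_natCast] at h ⊢
    norm_num at h ⊢
    linarith
  have hu : (0:ℝ) < (2:ℝ) ^ (e + 1) := zpow_pos (by norm_num) _
  have hv : (0:ℝ) < (2:ℝ) ^ (1 - e) := zpow_pos (by norm_num) _
  have huv : (2:ℝ) ^ (e + 1) * (2:ℝ) ^ (1 - e) = 4 := by
    rw [← zpow_add₀ (by norm_num : (2:ℝ) ≠ 0),
      show e + 1 + (1 - e) = 2 by ring]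
    norm_num
  have hxpos : 0 < x := by nlinarith
  have habs : |x| = x := abs_of_pos hxpos
  have hratio : Δs / Δ = x * (2:ℝ) ^ (1 - e) / (3 * Real.sqrt 2) := by
    rw [hΔ, hΔs, habs,
      show (1 - (p:ℤ)) = (1 - e) + (e - (p:ℤ)) by ring,
      zpow_add₀ (by norm_num : (2:ℝ) ≠ 0)]
    have hw : (0:ℝ) < (2:ℝ) ^ (e - (p:ℤ)) := zpow_pos (by norm_num) _
    field_simp
  have hxv₁ : (2:ℝ) ^ (e + 1) * (1 - (2:ℝ) ^ (-(p:ℤ) - 1)) * (2:ℝ) ^ (1 - e)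
      ≤ x * (2:ℝ) ^ (1 - e) := mul_le_mul_of_nonneg_right hx₁ hv.le
  have hxv₂ : x * (2:ℝ) ^ (1 - e)
      ≤ (2:ℝ) ^ (e + 1) * (1 + (2:ℝ) ^ (-(p:ℤ))) * (2:ℝ) ^ (1 - e) :=
    mul_le_mul_of_nonneg_right hx₂.le hv.le
  refine ⟨⟨?_, ?_⟩, ?_, ?_⟩
  · rw [hratio, div_le_div_iff₀ (by norm_num) (by positivity)]
    nlinarith
  · rw [hratio, div_le_div_iff₀ (by positivity) (by norm_num)]
    nlinarith
  · rw [div_le_div_iff₀ hs (by norm_num)]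
    nlinarith
  · rw [div_le_iff₀ (by norm_num : (0:ℝ) < 3)]
    nlinarith
end
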